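/- The function θ(λ) = 2(1-e^{-4λL})² / ((1+e^{-2λL})⁴ + (1-e^{-2λL})⁴) is strictly monotone increasing on (0,∞), equals 0 at λ = 0, and tends to 1 as λ → ∞. -/
import Mathlib


open Real Filter

/-- θ(λ) = 2(1-e^{-4λL})² / ((1+e^{-2λL})⁴ + (1-e^{-2λL})⁴) is strictly increasing
on (0,∞), equals 0 at λ = 0, and tends to 1 as λ → ∞. -/
theorem theta_monotone (L : ℝ) (hL : 0 < L) :
    let θ : ℝ → ℝ := fun lam =>
      2 * (1 - exp (-4 * lam * L)) ^ 2 /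
        ((1 + exp (-2 * lam * L)) ^ 4 + (1 - exp (-2 * lam * L)) ^ 4)
    StrictMonoOn θ (Set.Ioi (0 : ℝ)) ∧ θ 0 = 0 ∧ Tendsto θ atTop (nhds 1) := by
  intro θ
  refine ⟨?_, ?_, ?_⟩
  · intro x hx y hy hxy
    simp only [θ]
    have hx0 : (0:ℝ) < x := hx
    have hy0 : (0:ℝ) < y := hy
    have hax : exp (-4 * x * L) = exp (-2 * x * L) ^ 2 := by
      rw [show (-4:ℝ) * x * L = (-2 * x * L) + (-2 * x * L) by ring, exp_add]; ring
    have hay : exp (-4 * y * L) = exp (-2 * y * L) ^ 2 := by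
      rw [show (-4:ℝ) * y * L = (-2 * y * L) + (-2 * y * L) by ring, exp_add]; ring
    rw [hax, hay]
    set a := exp (-2 * x * L) with ha
    set b := exp (-2 * y * L) with hb
    have ha1 : a < 1 := by rw [ha, exp_lt_one_iff]; nlinarith
    have hba : b < a := by rw [ha, hb]; apply exp_lt_exp.2; nlinarith
    have hb0 : 0 < b := exp_pos _
    have hda : (0:ℝ) < (1 + a) ^ 4 + (1 - a) ^ 4 := by positivity
    have hdb : (0:ℝ) < (1 + b) ^ 4 + (1 - b) ^ 4 := by positivity
    rw [div_lt_div_iff₀ hda hdb]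
    nlinarith [mul_pos (mul_pos hb0 hb0) (mul_pos (sub_pos.2 hba) (sub_pos.2 ha1)),
      sq_nonneg (a*b), sq_nonneg (a-b), sq_nonneg (a+b),
      mul_pos hb0 (sub_pos.2 hba), mul_pos hb0 hb0]
  · simp [θ]
  · have h2 : Tendsto (fun lam : ℝ => exp (-2 * lam * L)) atTop (nhds 0) := by
      apply Real.tendsto_exp_atBot.comp
      apply Tendsto.atBot_mul_const hL
      exact tendsto_id.const_mul_atTop_of_neg (by norm_num)
    have h4 : Tendsto (fun lam : ℝ => exp (-4 * lam * L)) atTop (nhds 0) := by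
      apply Real.tendsto_exp_atBot.comp
      apply Tendsto.atBot_mul_const hL
      exact tendsto_id.const_mul_atTop_of_neg (by norm_num)
    have : Tendsto θ atTop (nhds ((2 * (1 - 0) ^ 2) / ((1 + 0) ^ 4 + (1 - 0) ^ 4))) := by
      apply Tendsto.div
      · exact (tendsto_const_nhds.sub h4).pow 2 |>.const_mul 2
      · exact ((tendsto_const_nhds.add h2).pow 4).add ((tendsto_const_nhds.sub h2).pow 4)
      · norm_num
    convert this using 2
    norm_num
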